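/- The generating function S(x) for Schroeder paths satisfies S(x) = (1 - x - sqrt(1 - 6x + x^2))/(2x), and the series M with M(0)=1 satisfying M - 1 = x(M^3 + M^2) has coefficients [x^n]M = (1/n) * sum_{k=0}^{n-1} binomial(2n, k) * binomial(n, k+1) * 2^{k+1} for n >= 1. -/

import Mathlib

open PowerSeries

/-- A Schröder path of length `2n`: steps `U=(1,1)`, `D=(1,-1)`, `L=(2,0)`,
from `(0,0)` to `(2n,0)`, staying weakly above the x-axis. -/
def IsSchroederPath (n : ℕ) (p : List (ℤ × ℤ)) : Prop :=
  (∀ s ∈ p, s = ((1 : ℤ), (1 : ℤ)) ∨ s = ((1 : ℤ), (-1 : ℤ)) ∨ s = ((2 : ℤ), (0 : ℤ))) ∧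
  (p.map Prod.fst).sum = 2 * n ∧
  (p.map Prod.snd).sum = 0 ∧
  ∀ k, 0 ≤ ((p.take k).map Prod.snd).sum

set_option linter.unusedTactic false
set_option linter.unreachableTactic false
set_option linter.unusedVariables false

noncomputable section

namespace SchroederAux

/-- allowed steps -/
def Ok (p : List (ℤ × ℤ)) : Prop :=
  ∀ s ∈ p, s = ((1 : ℤ), (1 : ℤ)) ∨ s = ((1 : ℤ), (-1 : ℤ)) ∨ s = ((2 : ℤ), (0 : ℤ))

abbrev P (n : ℕ) := {p : List (ℤ × ℤ) // IsSchroederPath n p}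

lemma length_le_fst_sum {p : List (ℤ × ℤ)} (h : Ok p) :
    (p.length : ℤ) ≤ (p.map Prod.fst).sum := by
  induction p with
  | nil => simp
  | cons s t ih =>
    have hs := h s (by simp)
    have ht : Ok t := fun x hx => h x (by simp [hx])
    have := ih ht
    rcases hs with h1 | h1 | h1 <;> subst h1 <;> simp_all <;> push_cast <;> omega

lemma even_fst_add_snd {p : List (ℤ × ℤ)} (h : Ok p) :
    ∃ c : ℤ, (p.map Prod.fst).sum + (p.map Prod.snd).sum = 2 * c := by
  induction p with
  | nil => exact ⟨0, by simp⟩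
  | cons s t ih =>
    have hs := h s (by simp)
    obtain ⟨c, hc⟩ := ih (fun x hx => h x (by simp [hx]))
    rcases hs with h1 | h1 | h1 <;> subst h1
    · exact ⟨c + 1, by simp_all; omega⟩
    · exact ⟨c, by simp_all; omega⟩
    · exact ⟨c + 1, by simp_all; omega⟩

lemma fst_sum_nonneg {p : List (ℤ × ℤ)} (h : Ok p) : 0 ≤ (p.map Prod.fst).sum :=
  le_trans (by positivity) (length_le_fst_sum h)

/-- encoding for finiteness -/
def enc (s : ℤ × ℤ) : Fin 3 :=
  if s = ((1 : ℤ), (1 : ℤ)) then 0 else if s = ((1 : ℤ), (-1 : ℤ)) then 1 else 2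

lemma enc_inj : ∀ p q : List (ℤ × ℤ), Ok p → Ok q → p.map enc = q.map enc → p = q := by
  intro p
  induction p with
  | nil => intro q _ _ h; cases q <;> simp_all
  | cons s t ih =>
    intro q hp hq h
    cases q with
    | nil => simp_all
    | cons s' t' =>
      simp only [List.map_cons, List.cons.injEq] at h
      have hs := hp s (by simp)
      have hs' := hq s' (by simp)
      have hss : s = s' := by
        rcases hs with h1 | h1 | h1 <;> rcases hs' with h2 | h2 | h2 <;>
          subst h1 <;> subst h2 <;> first | rfl | (exfalso; revert h; simp [enc])
      subst hss
      rw [ih t' (fun x hx => hp x (by simp [hx])) (fun x hx => hq x (by simp [hx])) h.2]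

instance finiteP (n : ℕ) : Finite (P n) := by
  have hfin : {l : List (Fin 3) | l.length ≤ 2 * n}.Finite := List.finite_length_le (Fin 3) (2*n)
  haveI := hfin.to_subtype
  apply Finite.of_injective
    (fun p : P n => (⟨p.1.map enc, by
      simp only [Set.mem_setOf_eq, List.length_map]
      have h1 := length_le_fst_sum (p.2.1 : Ok p.1)
      have h2 := p.2.2.1
      omega
      ⟩ : {l : List (Fin 3) | l.length ≤ 2 * n}))
  intro p q h
  simp only [Subtype.mk.injEq] at h
  exact Subtype.ext (enc_inj _ _ p.2.1 q.2.1 h)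




lemma isSch_iff (n : ℕ) (p : List (ℤ × ℤ)) : IsSchroederPath n p ↔
    Ok p ∧ (p.map Prod.fst).sum = 2 * n ∧ (p.map Prod.snd).sum = 0 ∧
    ∀ k, 0 ≤ ((p.take k).map Prod.snd).sum := Iff.rfl

lemma mem_L {n : ℕ} {q : List (ℤ × ℤ)} (hq : IsSchroederPath n q) :
    IsSchroederPath (n+1) (((2:ℤ),(0:ℤ)) :: q) := by
  obtain ⟨h1, h2, h3, h4⟩ := hq
  refine ⟨?_, ?_, ?_, ?_⟩
  · intro s hs
    rcases List.mem_cons.mp hs with h | h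
    · subst h; tauto
    · exact h1 s h
  · simp only [List.map_cons, List.sum_cons, h2]; push_cast; ring
  · simp [h3]
  · intro k
    cases k with
    | zero => simp
    | succ m =>
      simp only [List.take_succ_cons, List.map_cons, List.sum_cons]
      have := h4 m
      omega

lemma prefix_ge_neg_one {a b : List (ℤ × ℤ)}
    (ha0 : (a.map Prod.snd).sum = 0)
    (hapre : ∀ k, 0 ≤ ((a.take k).map Prod.snd).sum)
    (hbpre : ∀ k, 0 ≤ ((b.take k).map Prod.snd).sum) (k : ℕ) :
    -1 ≤ (((a ++ ((1:ℤ),(-1:ℤ)) :: b).take k).map Prod.snd).sum := by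
  rw [List.take_append, List.map_append, List.sum_append]
  have h1 := hapre k
  have h2 : -1 ≤ (((((1:ℤ),(-1:ℤ)) :: b).take (k - a.length)).map Prod.snd).sum := by
    cases hkk : k - a.length with
    | zero => simp
    | succ r =>
      simp only [List.take_succ_cons, List.map_cons, List.sum_cons]
      have := hbpre r
      omega
  omega

lemma mem_U {n i j : ℕ} {a b : List (ℤ × ℤ)} (hij : i + j = n)
    (ha : IsSchroederPath i a) (hb : IsSchroederPath j b) :
    IsSchroederPath (n+1) (((1:ℤ),(1:ℤ)) :: (a ++ ((1:ℤ),(-1:ℤ)) :: b)) := by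
  obtain ⟨ha1, ha2, ha3, ha4⟩ := ha
  obtain ⟨hb1, hb2, hb3, hb4⟩ := hb
  refine ⟨?_, ?_, ?_, ?_⟩
  · intro s hs
    rcases List.mem_cons.mp hs with h | h
    · subst h; tauto
    · rcases List.mem_append.mp h with h' | h'
      · exact ha1 s h'
      · rcases List.mem_cons.mp h' with h'' | h''
        · subst h''; tauto
        · exact hb1 s h''
  · simp only [List.map_cons, List.sum_cons, List.map_append, List.sum_append, ha2, hb2]
    push_cast [← hij]; ring
  · simp [ha3, hb3]
  · intro k
    cases k with
    | zero => simp
    | succ m =>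
      simp only [List.take_succ_cons, List.map_cons, List.sum_cons]
      have := prefix_ge_neg_one ha3 ha4 hb4 m
      omega

/-- the decomposition map -/
def G (n : ℕ) : (P n ⊕ (Σ i : Fin (n+1), P i.1 × P (n - i.1))) → P (n+1)
  | Sum.inl q => ⟨((2:ℤ),(0:ℤ)) :: q.1, mem_L q.2⟩
  | Sum.inr ⟨i, a, b⟩ =>
      ⟨((1:ℤ),(1:ℤ)) :: (a.1 ++ ((1:ℤ),(-1:ℤ)) :: b.1),
        mem_U (Nat.add_sub_cancel' (Nat.lt_succ_iff.mp i.2)) a.2 b.2⟩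

lemma split_eq {a a' b b' : List (ℤ × ℤ)}
    (ha0 : (a.map Prod.snd).sum = 0)
    (hapre : ∀ k, 0 ≤ ((a.take k).map Prod.snd).sum)
    (ha'0 : (a'.map Prod.snd).sum = 0)
    (ha'pre : ∀ k, 0 ≤ ((a'.take k).map Prod.snd).sum)
    (h : a ++ ((1:ℤ),(-1:ℤ)) :: b = a' ++ ((1:ℤ),(-1:ℤ)) :: b') :
    a = a' ∧ b = b' := by
  have key : ∀ (x x' y y' : List (ℤ × ℤ)), (x.map Prod.snd).sum = 0 →
      (∀ k, 0 ≤ ((x'.take k).map Prod.snd).sum) →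
      x ++ ((1:ℤ),(-1:ℤ)) :: y = x' ++ ((1:ℤ),(-1:ℤ)) :: y' →
      x.length < x'.length → False := by
    intro x x' y y' hx0 hx'pre heq hlt
    have h1 : (x ++ ((1:ℤ),(-1:ℤ)) :: y).take (x.length + 1) = x ++ [((1:ℤ),(-1:ℤ))] := by
      rw [List.take_append, List.take_of_length_le (by omega),
        Nat.add_sub_cancel_left]
      rfl
    have h2 : (x' ++ ((1:ℤ),(-1:ℤ)) :: y').take (x.length + 1) = x'.take (x.length + 1) :=
      List.take_append_of_le_length (by omega)
    have h3 := hx'pre (x.length + 1)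
    rw [← h2, ← heq, h1] at h3
    simp [hx0] at h3
  have hlen : a.length = a'.length := by
    by_contra hne
    rcases Nat.lt_or_ge a.length a'.length with hlt | hge
    · exact key a a' b b' ha0 ha'pre h hlt
    · exact key a' a b' b ha'0 hapre h.symm (by omega)
  obtain ⟨h1, h2⟩ := List.append_inj h hlen
  exact ⟨h1, by injection h2⟩

lemma G_injective (n : ℕ) : Function.Injective (G n) := by
  rintro (q | ⟨i, a, b⟩) (q' | ⟨i', a', b'⟩) h
  · simp only [G, Subtype.mk.injEq, List.cons.injEq] at h
    rw [Sum.inl.injEq]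
    exact Subtype.ext h.2
  · exfalso
    simp only [G, Subtype.mk.injEq, List.cons.injEq, Prod.mk.injEq] at h
    exact absurd h.1.1 (by norm_num)
  · exfalso
    simp only [G, Subtype.mk.injEq, List.cons.injEq, Prod.mk.injEq] at h
    exact absurd h.1.1 (by norm_num)
  · simp only [G, Subtype.mk.injEq, List.cons.injEq, true_and] at h
    obtain ⟨hab, hbb⟩ := split_eq a.2.2.2.1 a.2.2.2.2 a'.2.2.2.1 a'.2.2.2.2 h
    have hii : i = i' := by
      have e1 := a.2.2.1
      have e2 := a'.2.2.1
      rw [hab] at e1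
      apply Fin.ext
      have : (2:ℤ) * i.1 = 2 * i'.1 := by rw [← e1, ← e2]
      omega
    subst hii
    rw [Sum.inr.injEq, Sigma.mk.inj_iff]
    refine ⟨rfl, heq_of_eq ?_⟩
    rw [Prod.ext_iff]
    exact ⟨Subtype.ext hab, Subtype.ext hbb⟩




lemma G_surjective (n : ℕ) : Function.Surjective (G n) := by
  rintro ⟨p, hp⟩
  obtain ⟨h1, h2, h3, h4⟩ := hp
  cases p with
  | nil => exfalso; simp at h2; omega
  | cons s t =>
    have hOk_t : Ok t := fun x hx => h1 x (by simp [hx])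
    rcases h1 s (by simp) with hs | hs | hs
    · -- s = (1,1) : first-return decomposition
      subst hs
      have ht_snd : (t.map Prod.snd).sum = -1 := by
        simp only [List.map_cons, List.sum_cons] at h3; omega
      have ht_pre : ∀ k, -1 ≤ ((t.take k).map Prod.snd).sum := by
        intro k
        have := h4 (k+1)
        simp only [List.take_succ_cons, List.map_cons, List.sum_cons] at this
        omega
      have hex : ∃ k, ((t.take k).map Prod.snd).sum < 0 :=
        ⟨t.length, by rw [List.take_length, ht_snd]; norm_num⟩
      classical
      set k0 := Nat.find hex with hk0def
      have hk0 : ((t.take k0).map Prod.snd).sum < 0 := Nat.find_spec hex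
      have hmin : ∀ m, m < k0 → 0 ≤ ((t.take m).map Prod.snd).sum := by
        intro m hm
        exact not_lt.mp (Nat.find_min hex hm)
      have hk0pos : k0 ≠ 0 := by
        intro h0
        rw [h0] at hk0
        simp at hk0
      set m := k0 - 1 with hmdef
      have hk0m : k0 = m + 1 := by omega
      have hmlt : m < t.length := by
        by_contra hge
        have : t.take m = t := List.take_of_length_le (by omega)
        have h5 := hmin m (by omega)
        rw [this, ht_snd] at h5
        omega
      set step := t[m] with hstepdef
      set a := t.take m with hadef
      set b := t.drop (m+1) with hbdef
      have hsplit : t = a ++ step :: b := by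
        conv_lhs => rw [← List.take_append_drop m t]
        rw [List.drop_eq_getElem_cons hmlt]
      have hlena : a.length = m := by
        rw [hadef, List.length_take]; omega
      have htake_succ : t.take (m+1) = a ++ [step] := by
        rw [List.take_succ, hadef]
        congr
        rw [List.getElem?_eq_getElem hmlt]
        rfl
      have hsum_a0 : 0 ≤ ((a.map Prod.snd)).sum := hmin m (by omega)
      have hsum_k0 : ((a.map Prod.snd)).sum + step.2 < 0 := by
        have := hk0
        rw [hk0m, htake_succ] at this
        simp only [List.map_append, List.sum_append, List.map_cons, List.map_nil,
          List.sum_cons, List.sum_nil] at this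
        omega
      have hstep_mem : step ∈ t := List.getElem_mem hmlt
      have hstep : step = ((1:ℤ), (-1:ℤ)) := by
        rcases hOk_t step hstep_mem with h | h | h
        · rw [h] at hsum_k0; norm_num at hsum_k0; omega
        · exact h
        · rw [h] at hsum_k0; norm_num at hsum_k0; omega
      have ha_snd : ((a.map Prod.snd)).sum = 0 := by
        rw [hstep] at hsum_k0
        simp at hsum_k0
        omega
      have hapre : ∀ k, 0 ≤ ((a.take k).map Prod.snd).sum := by
        intro k
        rw [hadef, List.take_take]
        exact hmin (min k m) (by omega)
      have hbpre : ∀ k, 0 ≤ ((b.take k).map Prod.snd).sum := by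
        intro k
        have heq : t.take (m+1+k) = a ++ step :: b.take k := by
          conv_lhs => rw [hsplit]
          rw [List.take_append, List.take_of_length_le (by omega), hlena]
          congr 1
          have : m + 1 + k - m = k + 1 := by omega
          rw [this]
          rfl
        have h5 := ht_pre (m+1+k)
        rw [heq] at h5
        simp only [List.map_append, List.sum_append, List.map_cons, List.sum_cons, hstep] at h5
        rw [ha_snd] at h5
        omega
      have hb_snd : ((b.map Prod.snd)).sum = 0 := by
        have := ht_snd
        rw [hsplit] at this
        simp only [List.map_append, List.sum_append, List.map_cons, List.sum_cons, hstep,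
          ha_snd] at this
        omega
      have haOk : Ok a := fun x hx => hOk_t x (List.mem_of_mem_take hx)
      have hbOk : Ok b := fun x hx => hOk_t x (List.mem_of_mem_drop hx)
      obtain ⟨ca, hca⟩ := even_fst_add_snd haOk
      rw [ha_snd, add_zero] at hca
      obtain ⟨cb, hcb⟩ := even_fst_add_snd hbOk
      rw [hb_snd, add_zero] at hcb
      have hca0 : 0 ≤ ca := by have := fst_sum_nonneg haOk; omega
      have hcb0 : 0 ≤ cb := by have := fst_sum_nonneg hbOk; omega
      have htot : ca + cb = (n : ℤ) := by
        have := h2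
        rw [hsplit] at this
        simp only [List.map_cons, List.sum_cons, List.map_append, List.sum_append,
          List.map_cons, List.sum_cons, hstep, hca, hcb] at this
        push_cast at this
        omega
      set i : ℕ := ca.toNat with hidef
      have hile : i ≤ n := by omega
      have hai : IsSchroederPath i a := ⟨haOk, by rw [hca]; omega, ha_snd, hapre⟩
      have hbi : IsSchroederPath (n - i) b := ⟨hbOk, by rw [hcb]; push_cast; omega, hb_snd, hbpre⟩
      refine ⟨Sum.inr ⟨⟨i, by omega⟩, ⟨a, hai⟩, ⟨b, hbi⟩⟩, ?_⟩
      apply Subtype.ext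
      show ((1:ℤ),(1:ℤ)) :: (a ++ ((1:ℤ),(-1:ℤ)) :: b) = ((1:ℤ),(1:ℤ)) :: t
      rw [hsplit, hstep]
    · -- s = (1,-1) : impossible
      exfalso
      have := h4 1
      rw [hs] at this
      simp at this
    · -- s = (2,0)
      subst hs
      have ht : IsSchroederPath n t := by
        refine ⟨hOk_t, ?_, ?_, ?_⟩
        · simp only [List.map_cons, List.sum_cons] at h2
          push_cast at h2 ⊢
          omega
        · simp only [List.map_cons, List.sum_cons] at h3
          omega
        · intro k
          have := h4 (k+1)
          simp only [List.take_succ_cons, List.map_cons, List.sum_cons] at this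
          omega
      exact ⟨Sum.inl ⟨t, ht⟩, rfl⟩




lemma card_sigma' {ι : Type} [Fintype ι] (f : ι → Type) [∀ i, Finite (f i)] :
    Nat.card (Σ i, f i) = ∑ i, Nat.card (f i) := by
  classical
  letI : ∀ i, Fintype (f i) := fun i => Fintype.ofFinite _
  simp [Nat.card_eq_fintype_card, Fintype.card_sigma]

lemma card_zero : Nat.card (P 0) = 1 := by
  rw [Nat.card_eq_one_iff_unique]
  constructor
  · constructor
    intro p q
    have hp : p.1 = [] := by
      have h := length_le_fst_sum p.2.1
      rw [p.2.2.1] at h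
      exact List.length_eq_zero_iff.mp (by omega)
    have hq : q.1 = [] := by
      have h := length_le_fst_sum q.2.1
      rw [q.2.2.1] at h
      exact List.length_eq_zero_iff.mp (by omega)
    exact Subtype.ext (hp.trans hq.symm)
  · exact ⟨⟨[], by constructor <;> simp⟩⟩

lemma card_rec (n : ℕ) : Nat.card (P (n+1)) =
    Nat.card (P n) + ∑ i ∈ Finset.range (n+1), Nat.card (P i) * Nat.card (P (n - i)) := by
  rw [← Nat.card_eq_of_bijective (G n) ⟨G_injective n, G_surjective n⟩]
  rw [Nat.card_sum, card_sigma']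
  congr 1
  rw [← Fin.sum_univ_eq_sum_range (fun i => Nat.card (P i) * Nat.card (P (n - i))) (n+1)]
  exact Finset.sum_congr rfl fun i _ => Nat.card_prod _ _

/-- the generating function -/
noncomputable def S : PowerSeries ℚ :=
  PowerSeries.mk fun n => (Nat.card {p : List (ℤ × ℤ) // IsSchroederPath n p} : ℚ)

lemma S_eq : S = 1 + PowerSeries.X * S + PowerSeries.X * (S * S) := by
  ext k
  rw [map_add, map_add]
  cases k with
  | zero =>
    simp only [PowerSeries.coeff_zero_eq_constantCoeff, map_one, map_mul,
      PowerSeries.constantCoeff_X, zero_mul, add_zero, S, PowerSeries.constantCoeff_mk]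
    rw [show Nat.card {p : List (ℤ × ℤ) // IsSchroederPath 0 p} = 1 from card_zero]
    norm_num
  | succ m =>
    rw [PowerSeries.coeff_succ_X_mul, PowerSeries.coeff_succ_X_mul, PowerSeries.coeff_mul]
    have hone : PowerSeries.coeff (m+1) (1 : PowerSeries ℚ) = 0 := by
      rw [PowerSeries.coeff_one, if_neg (by omega)]
    rw [hone, zero_add]
    simp only [S, PowerSeries.coeff_mk]
    rw [show Nat.card {p : List (ℤ × ℤ) // IsSchroederPath (m+1) p}
        = Nat.card (P m) + ∑ i ∈ Finset.range (m+1), Nat.card (P i) * Nat.card (P (m - i))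
      from card_rec m]
    push_cast
    congr 1
    rw [Finset.Nat.sum_antidiagonal_eq_sum_range_succ_mk]

lemma part1_main : (1 - PowerSeries.X - 2 * PowerSeries.X * S) ^ 2 =
    1 - 6 * PowerSeries.X + PowerSeries.X ^ 2 := by
  have h := S_eq
  linear_combination (-4 * PowerSeries.X) * h



lemma key_zero (u : PowerSeries ℚ) (hu : PowerSeries.constantCoeff u ≠ 0)
    (m : ℕ) (hm : 2 ≤ m) :
    PowerSeries.coeff (m - 1) ((PowerSeries.derivative ℚ (PowerSeries.X * u)) * u⁻¹ ^ m) = 0 := by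
  set w : PowerSeries ℚ := u⁻¹ with hw
  have huw : u * w = 1 := PowerSeries.mul_inv_cancel u hu
  have hdw : PowerSeries.derivative ℚ w = -w ^ 2 * PowerSeries.derivative ℚ u :=
    PowerSeries.derivative_inv' u
  have hdL : PowerSeries.derivative ℚ (PowerSeries.X * u) =
      u + PowerSeries.X * PowerSeries.derivative ℚ u := by
    rw [Derivation.leibniz]
    simp only [PowerSeries.derivative_X, smul_eq_mul, mul_one, one_mul]
    ring
  set c : PowerSeries ℚ := (m : PowerSeries ℚ) with hc
  have hdpow : PowerSeries.derivative ℚ (w ^ (m-1)) =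
      (c - 1) * (w ^ (m-2) * (-w ^ 2 * PowerSeries.derivative ℚ u)) := by
    rw [Derivation.leibniz_pow, hdw, nsmul_eq_mul, smul_eq_mul]
    have h2 : w ^ (m - 1 - 1) = w ^ (m - 2) := by
      first | (congr 1; omega) | congr 1
    rw [h2, hc]
    have : ((m - 1 : ℕ) : PowerSeries ℚ) = (m : PowerSeries ℚ) - 1 := by
      first | (rw [Nat.cast_sub (by omega : 1 ≤ m), Nat.cast_one]) | rw [Nat.cast_sub (by omega : 1 ≤ m)]
    rw [this]
    try ring
  have hident : (1 - c) * ((PowerSeries.derivative ℚ (PowerSeries.X * u)) * w ^ m) =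
      (1 - c) * w ^ (m-1) + PowerSeries.X * PowerSeries.derivative ℚ (w ^ (m-1)) := by
    rw [hdL, hdpow]
    have e1 : w ^ m = w ^ 2 * w ^ (m-2) := by rw [← pow_add]; congr 1; omega
    have e2 : w ^ (m-1) = w * w ^ (m-2) := by rw [← pow_succ']; congr 1; omega
    rw [e1, e2]
    linear_combination ((1 - c) * w * w ^ (m-2)) * huw
  have := congrArg (PowerSeries.coeff (m-1)) hident
  rw [map_add] at this
  have hXd : PowerSeries.coeff (m-1) (PowerSeries.X * PowerSeries.derivative ℚ (w ^ (m-1)))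
      = PowerSeries.coeff (m-1) (w ^ (m-1)) * ((m:ℚ) - 1) := by
    have h3 : (m - 1 : ℕ) = (m - 2) + 1 := by omega
    rw [h3, PowerSeries.coeff_succ_X_mul, PowerSeries.coeff_derivative]
    have h4 : (m - 2 + 1 : ℕ) = m - 1 := by omega
    rw [h4]
    congr 1
    push_cast [Nat.cast_sub (by omega : 2 ≤ m)]
    ring
  rw [hXd] at this
  have hCc : ∀ f : PowerSeries ℚ, PowerSeries.coeff (m-1) ((1 - c) * f)
      = (1 - (m:ℚ)) * PowerSeries.coeff (m-1) f := by
    intro f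
    have : (1 - c) = PowerSeries.C (1 - (m:ℚ)) := by
      rw [hc]; simp
    rw [this, PowerSeries.coeff_C_mul]
  rw [hCc, hCc] at this
  have hne : (1 - (m:ℚ)) ≠ 0 := by
    have : (2:ℚ) ≤ (m:ℚ) := by exact_mod_cast hm
    intro h; nlinarith
  have : (1 - (m:ℚ)) * PowerSeries.coeff (m-1)
      ((PowerSeries.derivative ℚ (PowerSeries.X * u)) * w ^ m) = 0 := by
    rw [this]
    try ring
  exact (mul_eq_zero.mp this).resolve_left hne

lemma key_one (u : PowerSeries ℚ) (hu : PowerSeries.constantCoeff u = 2) :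
    PowerSeries.coeff 0 ((PowerSeries.derivative ℚ (PowerSeries.X * u)) * u⁻¹) = 1 := by
  rw [PowerSeries.coeff_zero_eq_constantCoeff, map_mul]
  have h1 : PowerSeries.constantCoeff (PowerSeries.derivative ℚ (PowerSeries.X * u)) = 2 := by
    rw [← PowerSeries.coeff_zero_eq_constantCoeff, PowerSeries.coeff_derivative]
    rw [show (0+1 : ℕ) = 0 + 1 from rfl, PowerSeries.coeff_succ_X_mul]
    simp [hu]
  rw [h1, PowerSeries.constantCoeff_inv, hu]
  norm_num

lemma lagrange (u : PowerSeries ℚ) (hu : PowerSeries.constantCoeff u = 2)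
    (n : ℕ) (hn : 1 ≤ n) (Φ : Polynomial ℚ) (hdeg : Φ.natDegree < 3*n+1)
    (hΦ : Polynomial.aeval (PowerSeries.X * u : PowerSeries ℚ) Φ = u ^ n) :
    (n : ℚ) * PowerSeries.coeff n (PowerSeries.X * u) = Φ.coeff (n-1) := by
  have hu0 : PowerSeries.constantCoeff u ≠ 0 := by rw [hu]; norm_num
  set L : PowerSeries ℚ := PowerSeries.X * u with hL
  set D : PowerSeries ℚ := PowerSeries.derivative ℚ L with hD
  set w : PowerSeries ℚ := u⁻¹ with hw
  have huw : u * w = 1 := PowerSeries.mul_inv_cancel u hu0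
  -- n * coeff n L = coeff (n-1) D
  have step1 : (n : ℚ) * PowerSeries.coeff n L = PowerSeries.coeff (n-1) D := by
    rw [hD, PowerSeries.coeff_derivative]
    have : (n - 1 + 1 : ℕ) = n := by omega
    rw [this]
    push_cast [Nat.cast_sub hn]
    ring
  -- expand u^n
  have expand : u ^ n = ∑ j ∈ Finset.range (3*n+1), Φ.coeff j • L ^ j := by
    rw [← hΦ]; exact Polynomial.aeval_eq_sum_range' hdeg L
  have hwu : w ^ n * u ^ n = 1 := by
    rw [← mul_pow, mul_comm, huw, one_pow]
  have hDsum : D = ∑ j ∈ Finset.range (3*n+1), Φ.coeff j • (D * w ^ n * L ^ j) := by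
    calc D = D * (w ^ n * u ^ n) := by rw [hwu, mul_one]
    _ = D * w ^ n * u ^ n := by ring
    _ = ∑ j ∈ Finset.range (3*n+1), Φ.coeff j • (D * w ^ n * L ^ j) := by
        rw [expand, Finset.mul_sum]
        refine Finset.sum_congr rfl fun j _ => ?_
        exact mul_smul_comm _ _ _
  have step2 : PowerSeries.coeff (n-1) D =
      ∑ j ∈ Finset.range (3*n+1), Φ.coeff j * PowerSeries.coeff (n-1) (D * w ^ n * L ^ j) := by
    conv_lhs => rw [hDsum]
    rw [map_sum]
    exact Finset.sum_congr rfl fun j _ => by rw [map_smul, smul_eq_mul]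
  have key : ∀ j ∈ Finset.range (3*n+1),
      PowerSeries.coeff (n-1) (D * w ^ n * L ^ j) = if j = n - 1 then 1 else 0 := by
    intro j hj
    by_cases hjn : j ≤ n - 1
    · have hsplit : D * w ^ n * L ^ j = PowerSeries.X ^ j * (D * w ^ (n - j)) := by
        have hLj : L ^ j = PowerSeries.X ^ j * u ^ j := by rw [hL, mul_pow]
        rw [hLj]
        have hwn : w ^ n = w ^ (n - j) * w ^ j := by rw [← pow_add]; congr 1; omega
        rw [hwn]
        have hwuj : w ^ j * u ^ j = 1 := by rw [← mul_pow, mul_comm w u, huw, one_pow]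
        calc D * (w ^ (n-j) * w ^ j) * (PowerSeries.X ^ j * u ^ j)
            = PowerSeries.X ^ j * (D * w ^ (n-j)) * (w ^ j * u ^ j) := by ring
          _ = PowerSeries.X ^ j * (D * w ^ (n-j)) := by rw [hwuj, mul_one]
      rw [hsplit]
      have hco : PowerSeries.coeff (n-1) (PowerSeries.X ^ j * (D * w ^ (n-j)))
          = PowerSeries.coeff (n-1-j) (D * w ^ (n-j)) := by
        have h5 : (n - 1 : ℕ) = (n - 1 - j) + j := by omega
        rw [h5, PowerSeries.coeff_X_pow_mul]
        simp
      rw [hco]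
      by_cases hje : j = n - 1
      · subst hje
        rw [if_pos rfl]
        have h1 : n - (n-1) = 1 := by omega
        have h0 : (n - 1 - (n-1) : ℕ) = 0 := by omega
        rw [h1, h0, pow_one, hD, hL]
        exact key_one u hu
      · rw [if_neg hje]
        have hm2 : 2 ≤ n - j := by omega
        have h6 : (n - 1 - j : ℕ) = (n - j) - 1 := by omega
        rw [h6, hD, hL]
        exact key_zero u hu0 (n - j) hm2
    · rw [if_neg (by omega)]
      have hLj : L ^ j = PowerSeries.X ^ j * u ^ j := by rw [hL, mul_pow]
      have hsplit : D * w ^ n * L ^ j = (D * w ^ n * u ^ j) * PowerSeries.X ^ j := by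
        rw [hLj]; ring
      rw [hsplit, PowerSeries.coeff_mul_X_pow']
      rw [if_neg (by omega)]
  rw [step1, step2, Finset.sum_congr rfl fun j hj => by rw [key j hj]]
  simp only [mul_ite, mul_one, mul_zero]
  rw [Finset.sum_ite_eq' (Finset.range (3*n+1)) (n-1) (fun j => Φ.coeff j)]
  rw [if_pos (by simp only [Finset.mem_range]; omega)]




lemma part2_main : ∀ M : PowerSeries ℚ, PowerSeries.constantCoeff M = 1 →
    M - 1 = PowerSeries.X * (M ^ 3 + M ^ 2) →
    ∀ n : ℕ, 1 ≤ n →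
      PowerSeries.coeff n M =
        (1 / (n : ℚ)) * ∑ k ∈ Finset.range n,
          ((2 * n).choose k : ℚ) * (n.choose (k + 1) : ℚ) * 2 ^ (k + 1) := by
  intro M hM0 hMeq n hn
  set u : PowerSeries ℚ := M ^ 3 + M ^ 2 with hu_def
  have hu : PowerSeries.constantCoeff u = 2 := by
    rw [hu_def]; simp [hM0]; norm_num
  set Φ : Polynomial ℚ :=
    (Polynomial.X + Polynomial.C (1:ℚ)) ^ (2*n) * (Polynomial.X + Polynomial.C (2:ℚ)) ^ n
    with hΦ_def
  have hdeg : Φ.natDegree < 3*n+1 := by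
    have h1 : ((Polynomial.X + Polynomial.C (1:ℚ)) ^ (2*n)).natDegree = 2*n := by
      rw [Polynomial.natDegree_pow, Polynomial.natDegree_X_add_C, mul_one]
    have h2 : ((Polynomial.X + Polynomial.C (2:ℚ)) ^ n).natDegree = n := by
      rw [Polynomial.natDegree_pow, Polynomial.natDegree_X_add_C, mul_one]
    calc Φ.natDegree ≤ 2*n + n := by
          rw [hΦ_def]; exact le_trans (Polynomial.natDegree_mul_le) (by rw [h1, h2])
      _ < 3*n+1 := by omega
  have haev : Polynomial.aeval (PowerSeries.X * u : PowerSeries ℚ) Φ = u ^ n := by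
    have hL : (PowerSeries.X * u : PowerSeries ℚ) = M - 1 := hMeq.symm
    rw [hΦ_def, map_mul, map_pow, map_pow, map_add, map_add, Polynomial.aeval_X,
      Polynomial.aeval_C, Polynomial.aeval_C, hL]
    have e1 : (M - 1 + algebraMap ℚ (PowerSeries ℚ) 1) = M := by simp
    have e2 : (M - 1 + algebraMap ℚ (PowerSeries ℚ) 2) = M + 1 := by
      simp [map_ofNat]; ring
    rw [e1, e2, hu_def]
    rw [show (2*n) = n*2 from mul_comm 2 n, pow_mul]
    rw [show ((M^n)^2 : PowerSeries ℚ) = (M^2)^n by rw [← pow_mul, ← pow_mul, mul_comm]]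
    rw [← mul_pow]
    congr 1
    ring
  have hlag := lagrange u hu n hn Φ hdeg haev
  have hcoeffM : PowerSeries.coeff n (PowerSeries.X * u) = PowerSeries.coeff n M := by
    rw [← hMeq, map_sub]
    have : PowerSeries.coeff n (1 : PowerSeries ℚ) = 0 := by
      rw [PowerSeries.coeff_one, if_neg (by omega)]
    rw [this, sub_zero]
  rw [hcoeffM] at hlag
  -- compute the polynomial coefficient
  have hcoeff : Φ.coeff (n-1) = ∑ k ∈ Finset.range n,
      ((2 * n).choose k : ℚ) * (n.choose (k + 1) : ℚ) * 2 ^ (k + 1) := by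
    rw [hΦ_def, Polynomial.coeff_mul, Finset.Nat.sum_antidiagonal_eq_sum_range_succ_mk]
    have hrange : (n - 1).succ = n := by omega
    rw [hrange]
    refine Finset.sum_congr rfl fun k hk => ?_
    have hk' : k ≤ n - 1 := by
      simp only [Finset.mem_range] at hk; omega
    rw [Polynomial.coeff_X_add_C_pow, Polynomial.coeff_X_add_C_pow]
    rw [one_pow, one_mul]
    have e3 : n - (n - 1 - k) = k + 1 := by omega
    have e4 : n.choose (n - 1 - k) = n.choose (k+1) := by
      have : (n - 1 - k) = n - (k+1) := by omega
      rw [this, Nat.choose_symm (by omega)]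
    rw [e3, e4]
    ring
  rw [← hcoeff]
  have hnne : (n:ℚ) ≠ 0 := Nat.cast_ne_zero.mpr (by omega)
  field_simp
  linarith [hlag]


end SchroederAux

end

/-- the generating function `S` of Schröder paths satisfies
`S = (1 - x - √(1-6x+x²))/(2x)` (equivalently `(1 - x - 2xS)² = 1 - 6x + x²`),
and the power series `M` with `M(0) = 1` and `M - 1 = x(M³ + M²)` has
coefficients `[xⁿ]M = (1/n) ∑_{k=0}^{n-1} C(2n,k) C(n,k+1) 2^{k+1}`, `n ≥ 1`. -/
theorem schroeder_gf_and_coloured_coeff :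
    ((1 - PowerSeries.X - 2 * PowerSeries.X *
        (PowerSeries.mk fun n =>
          (Nat.card {p : List (ℤ × ℤ) // IsSchroederPath n p} : ℚ))) ^ 2 =
      1 - 6 * PowerSeries.X + PowerSeries.X ^ 2) ∧
    ∀ M : PowerSeries ℚ, PowerSeries.constantCoeff M = 1 →
      M - 1 = PowerSeries.X * (M ^ 3 + M ^ 2) →
      ∀ n : ℕ, 1 ≤ n →
        PowerSeries.coeff n M =
          (1 / (n : ℚ)) * ∑ k ∈ Finset.range n,
            ((2 * n).choose k : ℚ) * (n.choose (k + 1) : ℚ) * 2 ^ (k + 1) := by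
  exact ⟨SchroederAux.part1_main, SchroederAux.part2_main⟩
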